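/- Let ω ∈ (0,1), let s ≥ 1, let a_1,…,a_s and b_1,…,b_s be positive reals, and let ε ∈ (0,1). Then every finite subset S ⊆ ℤ^s satisfying ∑_{h ∈ ℤ^s∖S} ω_h ≤ ε² · ∑_{h ∈ ℤ^s} ω_h has cardinality |S| ≥ (1−ε²) · ∏_{j=1}^s (1 + 2 ∑_{h=1}^∞ ω^{a_j h^{b_j}}) ≥ (1−ε²) · ∏_{j=1}^s (1 + 2 ω^{a_j}). -/

import Mathlib

open Real Filter Asymptotics

lemma aux_summable_nat {ω a b : ℝ} (hω : ω ∈ Set.Ioo (0:ℝ) 1) (ha : 0 < a) (hb : 0 < b) :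
    Summable (fun n : ℕ => ω ^ (a * (n : ℝ) ^ b)) := by
  have hlog : Real.log ω < 0 := Real.log_neg hω.1 hω.2
  set c : ℝ := a * (-Real.log ω) with hc
  have hcpos : 0 < c := mul_pos ha (by linarith)
  have hlo := (isLittleO_log_rpow_atTop hb).comp_tendsto tendsto_natCast_atTop_atTop
  have hev : ∀ᶠ n : ℕ in atTop, ω ^ (a * (n : ℝ) ^ b) ≤ (n : ℝ) ^ (-2 : ℝ) := by
    filter_upwards [hlo.def (show (0:ℝ) < c/2 by positivity), eventually_ge_atTop 1] with n hn hn1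
    have hn0 : (0:ℝ) < (n:ℝ) := by exact_mod_cast hn1
    have hnb : (0:ℝ) ≤ (n:ℝ) ^ b := Real.rpow_nonneg hn0.le b
    have hlogn : 0 ≤ Real.log n := Real.log_nonneg (by exact_mod_cast hn1)
    simp only [Function.comp, Real.norm_eq_abs, abs_of_nonneg hlogn, abs_of_nonneg hnb] at hn
    have h2 : 2 * Real.log n ≤ c * (n:ℝ) ^ b := by nlinarith
    have e2 : (n:ℝ) ^ (-2:ℝ) = Real.exp (Real.log n * (-2)) := Real.rpow_def_of_pos hn0 _
    rw [Real.rpow_def_of_pos hω.1, e2]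
    apply Real.exp_le_exp.2
    have e1 : Real.log ω * (a * (n:ℝ)^b) = -(c * (n:ℝ)^b) := by rw [hc]; ring
    linarith
  apply summable_of_isBigO_nat (Real.summable_nat_rpow.mpr (by norm_num : (-2:ℝ) < -1))
  rw [isBigO_iff]
  refine ⟨1, ?_⟩
  filter_upwards [hev] with n hn
  rw [one_mul, Real.norm_eq_abs, Real.norm_eq_abs,
    abs_of_nonneg (Real.rpow_nonneg hω.1.le _)]
  exact hn.trans (le_abs_self _)

lemma aux_pi : ∀ {n : ℕ} (f : Fin n → ℤ → ℝ), (∀ j, Summable (f j)) → (∀ j m, 0 ≤ f j m) →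
    Summable (fun h : Fin n → ℤ => ∏ j, f j (h j)) ∧
    ∑' h : Fin n → ℤ, ∏ j, f j (h j) = ∏ j, ∑' m, f j m := by
  intro n
  induction n with
  | zero =>
    intro f hf h0
    simp only [Finset.univ_eq_empty, Finset.prod_empty]
    refine ⟨Summable.of_finite, ?_⟩
    exact tsum_eq_single default (fun b hb => absurd (Subsingleton.elim b default) hb)
  | succ n ih =>
    intro f hf h0
    obtain ⟨hG, hGt⟩ := ih (fun j => f j.succ) (fun j => hf j.succ) (fun j m => h0 j.succ m)
    have hF : Summable (fun p : ℤ × (Fin n → ℤ) => f 0 p.1 * ∏ j, f j.succ (p.2 j)) := by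
      have h := Summable.mul_of_nonneg (hf 0) hG (fun m => h0 0 m)
        (fun q => Finset.prod_nonneg fun j _ => h0 j.succ _)
      exact h
    have key : ∀ h : Fin (n+1) → ℤ,
        ∏ j, f j (h j) = f 0 (h 0) * ∏ j : Fin n, f j.succ (h j.succ) :=
      fun h => Fin.prod_univ_succ _
    let e : (Fin (n+1) → ℤ) ≃ ℤ × (Fin n → ℤ) :=
      ⟨fun h => (h 0, fun j => h j.succ), fun p => Fin.cons p.1 p.2,
        fun h => funext fun j => Fin.cases rfl (fun i => rfl) j,
        fun p => rfl⟩
    have hfe : (fun h : Fin (n+1) → ℤ => ∏ j, f j (h j)) =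
        (fun p : ℤ × (Fin n → ℤ) => f 0 p.1 * ∏ j, f j.succ (p.2 j)) ∘ e := funext key
    constructor
    · rw [hfe]; exact e.summable_iff.2 hF
    · calc ∑' h : Fin (n+1) → ℤ, ∏ j, f j (h j)
          = ∑' h : Fin (n+1) → ℤ,
            (fun p : ℤ × (Fin n → ℤ) => f 0 p.1 * ∏ j, f j.succ (p.2 j)) (e h) :=
            tsum_congr key
      _ = ∑' p : ℤ × (Fin n → ℤ), f 0 p.1 * ∏ j, f j.succ (p.2 j) := by exact e.tsum_eq (fun p : ℤ × (Fin n → ℤ) => f 0 p.1 * ∏ j, f j.succ (p.2 j))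
      _ = ∑' m : ℤ, ∑' q : Fin n → ℤ, f 0 m * ∏ j, f j.succ (q j) :=
          Summable.tsum_prod' hF (fun m => hG.mul_left (f 0 m))
      _ = ∑' m : ℤ, f 0 m * ∑' q : Fin n → ℤ, ∏ j, f j.succ (q j) :=
          tsum_congr fun m => tsum_mul_left
      _ = (∑' m : ℤ, f 0 m) * ∑' q : Fin n → ℤ, ∏ j, f j.succ (q j) := tsum_mul_right
      _ = ∏ j, ∑' m, f j m := by rw [hGt, Fin.prod_univ_succ]

lemma aux_int {ω a b : ℝ} (hω : ω ∈ Set.Ioo (0:ℝ) 1) (ha : 0 < a) (hb : 0 < b) :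
    Summable (fun m : ℤ => ω ^ (a * |(m : ℝ)| ^ b)) ∧
    Summable (fun n : ℕ => ω ^ (a * ((n : ℝ) + 1) ^ b)) ∧
    ∑' m : ℤ, ω ^ (a * |(m : ℝ)| ^ b) = 1 + 2 * ∑' n : ℕ, ω ^ (a * ((n : ℝ) + 1) ^ b) := by
  have hnat : Summable (fun n : ℕ => ω ^ (a * (n : ℝ) ^ b)) := aux_summable_nat hω ha hb
  have hshift : Summable (fun n : ℕ => ω ^ (a * ((n : ℝ) + 1) ^ b)) := by
    refine ((summable_nat_add_iff 1).2 hnat).congr fun n => ?_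
    push_cast; ring_nf
  have h1 : ∀ n : ℕ, ω ^ (a * |((n : ℤ) : ℝ)| ^ b) = ω ^ (a * (n : ℝ) ^ b) := by
    intro n; rw [Int.cast_natCast, abs_of_nonneg (Nat.cast_nonneg n)]
  have h2 : ∀ n : ℕ, ω ^ (a * |((-((n : ℤ) + 1)) : ℝ)| ^ b) = ω ^ (a * ((n : ℝ) + 1) ^ b) := by
    intro n; rw [abs_neg, abs_of_nonneg (by positivity)]; norm_num
  have hf1 : Summable (fun n : ℕ => ω ^ (a * |(((n : ℤ)) : ℝ)| ^ b)) :=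
    hnat.congr fun n => (h1 n).symm
  have hf2 : Summable (fun n : ℕ => ω ^ (a * |((((-((n : ℕ)+1)) : ℤ)) : ℝ)| ^ b)) := by
    refine hshift.congr fun n => ?_
    push_cast
    exact (h2 n).symm
  refine ⟨Summable.of_nat_of_neg_add_one hf1 hf2, hshift, ?_⟩
  have ht := tsum_of_nat_of_neg_add_one (f := fun m : ℤ => ω ^ (a * |(m : ℝ)| ^ b)) hf1 hf2
  rw [ht]
  have hA : ∑' n : ℕ, ω ^ (a * |((n : ℤ) : ℝ)| ^ b) =
      1 + ∑' n : ℕ, ω ^ (a * ((n : ℝ) + 1) ^ b) := by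
    rw [tsum_congr h1, Summable.tsum_eq_zero_add hnat]
    congr 1
    · rw [Nat.cast_zero, Real.zero_rpow hb.ne', mul_zero, Real.rpow_zero]
    · exact tsum_congr fun n => by push_cast; ring_nf
  have hB : ∑' n : ℕ, ω ^ (a * |(((-((n : ℕ)+1)) : ℤ) : ℝ)| ^ b) =
      ∑' n : ℕ, ω ^ (a * ((n : ℝ) + 1) ^ b) := by
    refine tsum_congr fun n => ?_
    push_cast
    exact h2 n
  rw [hA, hB]; ring

/-- lower bound on the information complexity for the normalized error
criterion: any finite set S ⊆ ℤ^s with ∑_{h∉S} ω_h ≤ ε² ∑_{h∈ℤ^s} ω_h satisfies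
|S| ≥ (1-ε²) ∏_{j=1}^s (1 + 2∑_{h=1}^∞ ω^{a_j h^{b_j}}) ≥ (1-ε²) ∏_{j=1}^s (1 + 2ω^{a_j}). -/
theorem stmt9 (ω : ℝ) (hω : ω ∈ Set.Ioo (0:ℝ) 1) (s : ℕ) (hs : 1 ≤ s)
    (a b : Fin s → ℝ) (ha : ∀ j, 0 < a j) (hb : ∀ j, 0 < b j)
    (ε : ℝ) (hε : ε ∈ Set.Ioo (0:ℝ) 1) (S : Finset (Fin s → ℤ))
    (hS : ∑' h : {h : Fin s → ℤ // h ∉ S}, ω ^ (∑ j, a j * |(h.1 j : ℝ)| ^ (b j)) ≤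
      ε ^ 2 * ∑' h : Fin s → ℤ, ω ^ (∑ j, a j * |(h j : ℝ)| ^ (b j))) :
    (1 - ε ^ 2) * ∏ j, (1 + 2 * ω ^ (a j)) ≤
        (1 - ε ^ 2) * ∏ j, (1 + 2 * ∑' h : ℕ, ω ^ (a j * ((h : ℝ) + 1) ^ (b j))) ∧
    (1 - ε ^ 2) * ∏ j, (1 + 2 * ∑' h : ℕ, ω ^ (a j * ((h : ℝ) + 1) ^ (b j))) ≤
        (S.card : ℝ) := by
  have hε2 : 0 ≤ 1 - ε ^ 2 := by nlinarith [hε.1, hε.2]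
  set f : Fin s → ℤ → ℝ := fun j m => ω ^ (a j * |(m : ℝ)| ^ (b j)) with hf
  have hZ : ∀ j, Summable (f j) := fun j => (aux_int hω (ha j) (hb j)).1
  have hX : ∀ j, Summable (fun n : ℕ => ω ^ (a j * ((n : ℝ) + 1) ^ (b j))) :=
    fun j => (aux_int hω (ha j) (hb j)).2.1
  have hT : ∀ j, ∑' m : ℤ, f j m = 1 + 2 * ∑' n : ℕ, ω ^ (a j * ((n : ℝ) + 1) ^ (b j)) :=
    fun j => (aux_int hω (ha j) (hb j)).2.2
  have h0 : ∀ j m, 0 ≤ f j m := fun j m => Real.rpow_nonneg hω.1.le _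
  obtain ⟨hSig, hTs⟩ := aux_pi f hZ h0
  have key : ∀ h : Fin s → ℤ,
      ω ^ (∑ j, a j * |(h j : ℝ)| ^ (b j)) = ∏ j, f j (h j) := by
    intro h
    rw [Real.rpow_def_of_pos hω.1, Finset.mul_sum, Real.exp_sum]
    exact Finset.prod_congr rfl fun j _ => (Real.rpow_def_of_pos hω.1 _).symm
  have hF : Summable (fun h : Fin s → ℤ => ω ^ (∑ j, a j * |(h j : ℝ)| ^ (b j))) :=
    hSig.congr fun h => (key h).symm
  have prodEq : ∑' h : Fin s → ℤ, ω ^ (∑ j, a j * |(h j : ℝ)| ^ (b j)) =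
      ∏ j, (1 + 2 * ∑' n : ℕ, ω ^ (a j * ((n : ℝ) + 1) ^ (b j))) := by
    rw [tsum_congr key, hTs]
    exact Finset.prod_congr rfl fun j _ => hT j
  have hsplit := Summable.sum_add_tsum_subtype_compl hF S
  have hle1 : ∀ h : Fin s → ℤ, ω ^ (∑ j, a j * |(h j : ℝ)| ^ (b j)) ≤ 1 := by
    intro h
    exact Real.rpow_le_one hω.1.le hω.2.le
      (Finset.sum_nonneg fun j _ => mul_nonneg (ha j).le (Real.rpow_nonneg (abs_nonneg _) _))
  have hcard : ∑ h ∈ S, ω ^ (∑ j, a j * |(h j : ℝ)| ^ (b j)) ≤ (S.card : ℝ) := by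
    calc ∑ h ∈ S, ω ^ (∑ j, a j * |(h j : ℝ)| ^ (b j)) ≤ ∑ h ∈ S, (1:ℝ) :=
          Finset.sum_le_sum fun h _ => hle1 h
      _ = (S.card : ℝ) := by simp
  constructor
  · apply mul_le_mul_of_nonneg_left _ hε2
    apply Finset.prod_le_prod (fun j _ => by
      have := Real.rpow_nonneg hω.1.le (a j); linarith)
    intro j _
    have h00 : ω ^ (a j) = ω ^ (a j * (((0:ℕ) : ℝ) + 1) ^ (b j)) := by
      rw [Nat.cast_zero, zero_add, Real.one_rpow, mul_one]
    have := Summable.le_tsum (hX j) 0 (fun n _ => Real.rpow_nonneg hω.1.le _)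
    rw [h00]
    linarith
  · rw [← prodEq]
    set tot := ∑' h : Fin s → ℤ, ω ^ (∑ j, a j * |(h j : ℝ)| ^ (b j)) with htot
    have hx : (1 - ε ^ 2) * tot = tot - ε ^ 2 * tot := by ring
    linarith
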